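/- Let S = ⊕_{i∈ℤ} S_i be an epsilon-strongly ℤ-graded ring with principal component R = S_0, and for a right ideal I of S and n ≥ 1 set Id_n(I) = { r ∈ R : there exist s_i ∈ S_i for −n+1 ≤ i ≤ −1 with r + Σ_{i=−n+1}^{−1} s_i ∈ I }. If J ⊆ I are right ideals of S such that Id_n(I) = Id_n(J) for all n ≥ 1, then J = I. -/

import Mathlib

open Pointwise

/-- `A` is a `ℤ`-grading of the ring `S`: `S` is the internal direct sum of the
additive subgroups `A i`, and `A i * A j ⊆ A (i + j)` for all `i j : ℤ`. -/
def IsZGrading {S : Type*} [Ring S] (A : ℤ → AddSubgroup S) : Prop :=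
  DirectSum.IsInternal A ∧ ∀ i j : ℤ, ∀ x ∈ A i, ∀ y ∈ A j, x * y ∈ A (i + j)

/-- The `ℤ`-grading `A` is epsilon-strong: it is symmetric (`A i * A (-i) * A i = A i`)
and for every `i` there is `ε i ∈ A i * A (-i)` acting as a left identity on `A i`, with
`ε (-i)` acting as a right identity on `A i`.  Here `P * Q` denotes the additive subgroup
generated by products of elements of `P` and `Q`. -/
def IsEpsilonStrongZ {S : Type*} [Ring S] (A : ℤ → AddSubgroup S) : Prop :=
  (∀ i : ℤ, A i * A (-i) * A i = A i) ∧
  ∃ ε : ℤ → S, ∀ i : ℤ, ε i ∈ A i * A (-i) ∧ ∀ x ∈ A i, ε i * x = x ∧ x * ε (-i) = x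

/-- `I` is a right ideal of the ring `S`. -/
def IsRightIdeal {S : Type*} [Ring S] (I : Set S) : Prop :=
  (0 : S) ∈ I ∧ (∀ x ∈ I, ∀ y ∈ I, x + y ∈ I) ∧ (∀ x ∈ I, -x ∈ I) ∧
    ∀ x ∈ I, ∀ s : S, x * s ∈ I

/-- For a right ideal `I` of a `ℤ`-graded ring `S` and `n ≥ 1`,
`IdSet A I n = { r ∈ S_0 : r + ∑_{i = -n+1}^{-1} s_i ∈ I for some s_i ∈ S_i }`,
the set of leading (degree-zero) coefficients of elements of `I` of length at most `n`. -/
def IdSet {S : Type*} [Ring S] (A : ℤ → AddSubgroup S) (I : Set S) (n : ℕ) : Set S :=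
  {r : S | r ∈ A 0 ∧ ∃ s : ℤ → S, (∀ i : ℤ, s i ∈ A i) ∧
    r + ∑ i ∈ Finset.Icc (-(n : ℤ) + 1) (-1), s i ∈ I}

section Aux

variable {S : Type*} [Ring S]

lemma IsRightIdeal.sum_mem' {I : Set S} (hI : IsRightIdeal I) {α : Type*} (F : Finset α)
    (f : α → S) (hf : ∀ k ∈ F, f k ∈ I) : ∑ k ∈ F, f k ∈ I := by
  classical
  induction F using Finset.induction_on with
  | empty => simpa using hI.1
  | insert _ _ hx ih =>
    rw [Finset.sum_insert hx]
    exact hI.2.1 _ (hf _ (Finset.mem_insert_self _ _)) _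
      (ih fun k hk => hf k (Finset.mem_insert_of_mem hk))

lemma IsRightIdeal.sub_mem' {I : Set S} (hI : IsRightIdeal I) {x y : S}
    (hx : x ∈ I) (hy : y ∈ I) : x - y ∈ I := by
  rw [sub_eq_add_neg]
  exact hI.2.1 _ hx _ (hI.2.2.1 _ hy)

lemma mem_mul_repr {P Q : AddSubgroup S} {x : S} (hx : x ∈ P * Q) :
    ∃ (n : ℕ) (b a : Fin n → S), (∀ k, b k ∈ P) ∧ (∀ k, a k ∈ Q) ∧
      x = ∑ k, b k * a k := by
  have hx' : x ∈ P.toAddSubmonoid * Q.toAddSubmonoid := hx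
  refine AddSubmonoid.mul_induction_on hx' ?_ ?_
  · intro m hm n hn
    exact ⟨1, fun _ => m, fun _ => n, fun _ => hm, fun _ => hn, by simp⟩
  · rintro x y ⟨n1, b1, a1, hb1, ha1, rfl⟩ ⟨n2, b2, a2, hb2, ha2, rfl⟩
    refine ⟨n1 + n2, Fin.append b1 b2, Fin.append a1 a2, ?_, ?_, ?_⟩
    · intro k
      refine Fin.addCases (fun i => ?_) (fun i => ?_) k <;>
        simp [Fin.append_left, Fin.append_right, hb1, hb2]
    · intro k
      refine Fin.addCases (fun i => ?_) (fun i => ?_) k <;>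
        simp [Fin.append_left, Fin.append_right, ha1, ha2]
    · rw [Fin.sum_univ_add]
      simp [Fin.append_left, Fin.append_right]

/-- Every element of an internally graded ring is a finite sum of homogeneous components
supported in an interval. -/
lemma exists_interval_repr {A : ℤ → AddSubgroup S} (hA : DirectSum.IsInternal A) (x : S) :
    ∃ (m : ℤ) (N : ℕ) (c : ℤ → S), (∀ i, c i ∈ A i) ∧
      x = ∑ i ∈ Finset.Icc m (m + (N : ℤ) - 1), c i := by
  classical
  letI := hA.chooseDecomposition
  have hx : ∑ i ∈ (DirectSum.decompose A x).support, ((DirectSum.decompose A x) i : S) = x :=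
    DirectSum.sum_support_decompose A x
  set F := (DirectSum.decompose A x).support with hF
  set c : ℤ → S := fun i => ((DirectSum.decompose A x) i : S) with hc
  have hcm : ∀ i, c i ∈ A i := fun i => SetLike.coe_mem _
  have hczero : ∀ i ∉ F, c i = 0 := by
    intro i hi
    simp only [hc]
    rw [DFinsupp.notMem_support_iff.mp hi]
    rfl
  by_cases hFe : F.Nonempty
  · refine ⟨F.min' hFe, (F.max' hFe - F.min' hFe + 1).toNat, c, hcm, ?_⟩
    have hle : F.min' hFe ≤ F.max' hFe := F.min'_le _ (F.max'_mem hFe)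
    have hN : F.min' hFe + ((F.max' hFe - F.min' hFe + 1).toNat : ℤ) - 1 = F.max' hFe := by
      rw [Int.toNat_of_nonneg (by omega)]; ring
    rw [hN, ← hx]
    refine Finset.sum_subset ?_ ?_
    · intro i hi
      exact Finset.mem_Icc.mpr ⟨F.min'_le _ hi, F.le_max' _ hi⟩
    · intro i _ hi
      exact hczero i hi
  · refine ⟨0, 0, c, hcm, ?_⟩
    have : F = ∅ := Finset.not_nonempty_iff_eq_empty.mp hFe
    rw [← hx, this]
    simp

end Aux

/-- The key inductive claim: any element of `I` which is a sum of homogeneous components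
in degrees `m, …, m + N - 1` belongs to `J`. -/
lemma main_claim {S : Type*} [Ring S] (A : ℤ → AddSubgroup S)
    (hgrading : IsZGrading A) (heps : IsEpsilonStrongZ A)
    (I J : Set S) (hI : IsRightIdeal I) (hJ : IsRightIdeal J) (hJI : J ⊆ I)
    (h : ∀ n : ℕ, 1 ≤ n → IdSet A I n = IdSet A J n) :
    ∀ (N : ℕ) (m : ℤ) (c : ℤ → S), (∀ i, c i ∈ A i) →
      (∑ i ∈ Finset.Icc m (m + (N : ℤ) - 1), c i) ∈ I →
      (∑ i ∈ Finset.Icc m (m + (N : ℤ) - 1), c i) ∈ J := by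
  obtain ⟨ε, hε⟩ := heps.2
  intro N
  induction N with
  | zero =>
    intro m c _ _
    rw [show m + ((0 : ℕ) : ℤ) - 1 = m - 1 by push_cast; ring,
      Finset.Icc_eq_empty (by omega)]
    simpa using hJ.1
  | succ N ih =>
    intro m c hc hxI
    set d : ℤ := m + N with hd
    have htop : m + ((N + 1 : ℕ) : ℤ) - 1 = d := by push_cast; ring
    rw [htop] at hxI ⊢
    set x : S := ∑ i ∈ Finset.Icc m d, c i with hx
    -- split off the top term
    have hsplit : Finset.Icc m d = insert d (Finset.Icc m (d - 1)) := by
      ext i; simp only [Finset.mem_Icc, Finset.mem_insert]; omega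
    have hdnot : d ∉ Finset.Icc m (d - 1) := by simp only [Finset.mem_Icc]; omega
    have hxsplit : x = c d + ∑ i ∈ Finset.Icc m (d - 1), c i := by
      rw [hx, hsplit, Finset.sum_insert hdnot]
    -- decompose ε (-d) as a sum of products
    have hεmem : ε (-d) ∈ A (-d) * A d := by
      have := (hε (-d)).1
      rwa [neg_neg] at this
    obtain ⟨n, b, a, hb, ha, hεsum⟩ := mem_mul_repr hεmem
    -- the reindexing interval
    have hIccmap : (Finset.Icc (-(N : ℤ)) (-1)).map (addRightEmbedding d)
        = Finset.Icc m (d - 1) := by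
      rw [Finset.map_add_right_Icc]
      congr 1 <;> omega
    have hIccIdSet : Finset.Icc (-((N + 1 : ℕ) : ℤ) + 1) (-1) = Finset.Icc (-(N : ℤ)) (-1) := by
      congr 1; push_cast; ring
    -- each leading coefficient is in IdSet A I (N+1) = IdSet A J (N+1)
    have key : ∀ k : Fin n, c d * b k ∈ IdSet A J (N + 1) := by
      intro k
      rw [← h (N + 1) (Nat.le_add_left 1 N)]
      refine ⟨?_, fun i => c (i + d) * b k, ?_, ?_⟩
      · have := hgrading.2 d (-d) (c d) (hc d) (b k) (hb k)
        rwa [add_neg_cancel] at this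
      · intro i
        have := hgrading.2 (i + d) (-d) (c (i + d)) (hc (i + d)) (b k) (hb k)
        rwa [show i + d + -d = i by ring] at this
      · rw [hIccIdSet]
        have hsum : ∑ i ∈ Finset.Icc (-(N : ℤ)) (-1), c (i + d) * b k
            = ∑ i ∈ Finset.Icc m (d - 1), c i * b k := by
          rw [← hIccmap, Finset.sum_map]
          rfl
        rw [hsum]
        have : c d * b k + ∑ i ∈ Finset.Icc m (d - 1), c i * b k = x * b k := by
          rw [hxsplit, add_mul, Finset.sum_mul]
        rw [this]
        exact hI.2.2.2 x hxI (b k)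
    -- choose witnesses
    choose t ht hy using fun k => (key k).2
    rw [hIccIdSet] at hy
    -- the element z of J
    set y : Fin n → S := fun k => c d * b k + ∑ i ∈ Finset.Icc (-(N : ℤ)) (-1), t k i with hyd
    set z : S := ∑ k, y k * a k with hz
    have hzJ : z ∈ J :=
      hJ.sum_mem' _ _ (fun k _ => hJ.2.2.2 _ (hy k) (a k))
    -- compute z
    set u : ℤ → S := fun i => ∑ k, t k i * a k with hu
    have hzcalc : z = c d + ∑ i ∈ Finset.Icc (-(N : ℤ)) (-1), u i := by
      rw [hz]
      simp only [hyd, add_mul, Finset.sum_add_distrib, Finset.sum_mul]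
      congr 1
      · calc (∑ k, c d * b k * a k) = c d * ∑ k, b k * a k := by
              rw [Finset.mul_sum]; simp [mul_assoc]
          _ = c d := by rw [← hεsum]; exact ((hε d).2 (c d) (hc d)).2
      · exact Finset.sum_comm
    -- the new coefficient function
    set c' : ℤ → S := fun i => c i - u (i - d) with hc'
    have hc'mem : ∀ i, c' i ∈ A i := by
      intro i
      refine AddSubgroup.sub_mem _ (hc i) ?_
      refine AddSubgroup.sum_mem _ (fun k _ => ?_)
      have := hgrading.2 (i - d) d (t k (i - d)) (ht k (i - d)) (a k) (ha k)
      rwa [show i - d + d = i by ring] at this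
    have hxz : x - z = ∑ i ∈ Finset.Icc m (d - 1), c' i := by
      have husum : ∑ i ∈ Finset.Icc (-(N : ℤ)) (-1), u i
          = ∑ i ∈ Finset.Icc m (d - 1), u (i - d) := by
        rw [← hIccmap, Finset.sum_map]
        simp [addRightEmbedding]
      rw [hxsplit, hzcalc, husum]
      simp only [hc']
      rw [Finset.sum_sub_distrib]
      abel
    -- apply the induction hypothesis
    have hxzI : x - z ∈ I := hI.sub_mem' hxI (hJI hzJ)
    have htop' : m + (N : ℤ) - 1 = d - 1 := by rw [hd]
    have hxzJ : x - z ∈ J := by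
      rw [hxz]
      have := ih m c' hc'mem (by rw [htop']; rw [← hxz]; exact hxzI)
      rwa [htop'] at this
    have : x = (x - z) + z := by abel
    rw [this]
    exact hJ.2.1 _ hxzJ _ hzJ

/-- For an epsilon-strongly `ℤ`-graded ring `S`: if `J ⊆ I` are right ideals of `S` with
`IdSet A I n = IdSet A J n` for all `n ≥ 1`, then `J = I`. -/
theorem idSet_eq_implies_eq
    {S : Type*} [Ring S] (A : ℤ → AddSubgroup S)
    (hgrading : IsZGrading A) (heps : IsEpsilonStrongZ A)
    (I J : Set S) (hI : IsRightIdeal I) (hJ : IsRightIdeal J) (hJI : J ⊆ I)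
    (h : ∀ n : ℕ, 1 ≤ n → IdSet A I n = IdSet A J n) :
    J = I := by
  refine Set.Subset.antisymm hJI (fun x hx => ?_)
  obtain ⟨m, N, c, hc, rfl⟩ := exists_interval_repr hgrading.1 x
  exact main_claim A hgrading heps I J hI hJ hJI h N m c hc hx
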